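/- Let M > 0 and r₀ ∈ (0, 2M). If γ = (t, x) : [0,1] → ℝ × ℝ³ is a C¹ curve with 0 < ‖x(s)‖ < 2M and Q_M(t'(s), x'(s), x(s)) < 0 for every s ∈ [0,1], and ‖x(0)‖ = r₀, then ‖x(1)‖ ≠ r₀. In particular, no timelike curve of the interior Schwarzschild spacetime meets the hypersurface S_{r₀} := {(t,x) ∈ M_Sch : ‖x‖ = r₀} in two distinct points, i.e. S_{r₀} is achronal. -/

import Mathlib

/-- The Schwarzschild quadratic form of mass `M`, evaluated on a velocity `(t', x')`
at a point with spatial part `x` (where `0 < ‖x‖ < 2M`). -/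
noncomputable def QM (M : ℝ) (t' : ℝ) (x' x : EuclideanSpace ℝ (Fin 3)) : ℝ :=
  (2 * M / ‖x‖ - 1) * t' ^ 2 + ‖x'‖ ^ 2
    - (2 * M / ((2 * M - ‖x‖) * ‖x‖ ^ 2)) * (inner ℝ x x' : ℝ) ^ 2

/-- Let `M > 0` and `r₀ ∈ (0, 2M)`. If `γ = (t, x) : [0,1] → ℝ × ℝ³` is a C¹ curve with
`0 < ‖x(s)‖ < 2M` and `Q_M(t'(s), x'(s), x(s)) < 0` for every `s ∈ [0,1]`, and
`‖x(0)‖ = r₀`, then `‖x(1)‖ ≠ r₀`. In particular, no timelike curve of the interior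
Schwarzschild spacetime meets the hypersurface `S_{r₀}` in two distinct points,
i.e. `S_{r₀}` is achronal. -/
theorem hypersurface_achronal (M : ℝ) (hM : 0 < M) (r₀ : ℝ)
    (hr₀ : 0 < r₀) (hr₀' : r₀ < 2 * M)
    (t t' : ℝ → ℝ) (x x' : ℝ → EuclideanSpace ℝ (Fin 3))
    (ht : ∀ s ∈ Set.Icc (0 : ℝ) 1, HasDerivWithinAt t (t' s) (Set.Icc 0 1) s)
    (hx : ∀ s ∈ Set.Icc (0 : ℝ) 1, HasDerivWithinAt x (x' s) (Set.Icc 0 1) s)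
    (ht'c : ContinuousOn t' (Set.Icc 0 1)) (hx'c : ContinuousOn x' (Set.Icc 0 1))
    (hr : ∀ s ∈ Set.Icc (0 : ℝ) 1, 0 < ‖x s‖ ∧ ‖x s‖ < 2 * M)
    (htl : ∀ s ∈ Set.Icc (0 : ℝ) 1, QM M (t' s) (x' s) (x s) < 0)
    (hx0 : ‖x 0‖ = r₀) :
    ‖x 1‖ ≠ r₀ := by
  -- the inner product ⟨x s, x' s⟩ never vanishes
  have hfne : ∀ s ∈ Set.Icc (0 : ℝ) 1, (inner ℝ (x s) (x' s) : ℝ) ≠ 0 := by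
    intro s hs hzero
    have hQ := htl s hs
    obtain ⟨h0, h2⟩ := hr s hs
    have h1 : (1 : ℝ) < 2 * M / ‖x s‖ := (one_lt_div h0).mpr h2
    rw [QM, hzero] at hQ
    nlinarith [sq_nonneg (t' s), sq_nonneg ‖x' s‖, mul_nonneg (le_of_lt (sub_pos.mpr h1)) (sq_nonneg (t' s))]
  -- g s = ‖x s‖² has derivative 2⟨x s, x' s⟩
  have hg : ∀ s ∈ Set.Icc (0 : ℝ) 1,
      HasDerivWithinAt (fun s => ‖x s‖ ^ 2) (2 * (inner ℝ (x s) (x' s) : ℝ)) (Set.Icc 0 1) s := by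
    intro s hs
    have h := (hx s hs).inner ℝ (hx s hs)
    have heq : (fun s => (inner ℝ (x s) (x s) : ℝ)) = fun s => ‖x s‖ ^ 2 := by
      funext u; rw [real_inner_self_eq_norm_sq]
    rw [heq] at h
    refine h.congr_deriv ?_
    rw [real_inner_comm (x' s) (x s)]; ring
  have hgc : ContinuousOn (fun s => ‖x s‖ ^ 2) (Set.Icc 0 1) :=
    fun s hs => (hg s hs).continuousWithinAt
  intro h1
  have hgeq : ‖x 1‖ ^ 2 = ‖x 0‖ ^ 2 := by rw [h1, hx0]
  -- MVT
  have hderiv : ∀ s ∈ Set.Ioo (0 : ℝ) 1,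
      HasDerivAt (fun s => ‖x s‖ ^ 2) (2 * (inner ℝ (x s) (x' s) : ℝ)) s := by
    intro s hs
    exact (hg s (Set.mem_Icc_of_Ioo hs)).hasDerivAt (Icc_mem_nhds hs.1 hs.2)
  obtain ⟨c, hc, hceq⟩ := exists_hasDerivAt_eq_slope (fun s => ‖x s‖ ^ 2)
    (fun s => 2 * (inner ℝ (x s) (x' s) : ℝ)) one_pos hgc hderiv
  rw [hgeq] at hceq
  have h0 : 2 * (inner ℝ (x c) (x' c) : ℝ) = 0 := by rw [hceq]; ring
  exact hfne c (Set.mem_Icc_of_Ioo hc) (by linarith)
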